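/- Let X = Y ⊕₁ Z with Y, Z nontrivial Banach spaces admitting points (y₀,y₀*) ∈ Π(Y), (z₀,z₀*) ∈ Π(Z). Let δ ∈ (0,1), μ,θ ∈ [0,1] with 1-δ < μθ ≤ 2(1-δ). Then with k = (μ-θ+√((μ-θ)²+8(μθ-1+δ)))/(4μ), x₀ = (μk·y₀, μ(1-k)·z₀), x₀* = ((1-Ψ(μ,θ,δ))·y₀*, θ·z₀*), one has ‖x₀‖ = μ, ‖x₀*‖ = θ, x₀*(x₀) = 1-δ, and d_∞((x₀,x₀*),Π(X)) ≥ Ψ(μ,θ,δ). -/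

import Mathlib

open ContinuousLinearMap

/-- The function Ψ(μ,θ,δ) from the paper. -/
noncomputable def Psi (μ θ δ : ℝ) : ℝ :=
  (2 - μ - θ + Real.sqrt ((μ - θ)^2 + 8 * (μ * θ - 1 + δ))) / 2

/-- The set Π(X) of pairs of unit vectors and unit functionals attaining their norm. -/
def PiSet (X : Type*) [NormedAddCommGroup X] [NormedSpace ℝ X] : Set (X × (X →L[ℝ] ℝ)) :=
  {p | ‖p.1‖ = 1 ∧ ‖p.2‖ = 1 ∧ p.2 p.1 = 1}



lemma norm_L1 {Y Z : Type*} [SeminormedAddCommGroup Y] [SeminormedAddCommGroup Z]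
    (x : WithLp 1 (Y × Z)) : ‖x‖ = ‖x.fst‖ + ‖x.snd‖ := by
  rw [WithLp.prod_norm_eq_of_nat 1 (by norm_cast) x]; simp

lemma sharp_aux (δ μ θ : ℝ) (hδ0 : 0 < δ) (hδ1 : δ < 1) (hμ0 : 0 ≤ μ) (hμ1 : μ ≤ 1)
    (hθ0 : 0 ≤ θ) (hθ1 : θ ≤ 1) (h1 : 1 - δ < μ * θ) (h2 : μ * θ ≤ 2 * (1 - δ)) :
    0 < μ ∧ 0 < θ ∧
    0 ≤ (μ - θ + Real.sqrt ((μ - θ)^2 + 8 * (μ * θ - 1 + δ))) / 4 ∧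
    (μ - θ + Real.sqrt ((μ - θ)^2 + 8 * (μ * θ - 1 + δ))) / 4 ≤ μ ∧
    0 ≤ 1 - Psi μ θ δ ∧ 1 - Psi μ θ δ ≤ θ ∧
    (1 - Psi μ θ δ) * ((μ - θ + Real.sqrt ((μ - θ)^2 + 8 * (μ * θ - 1 + δ))) / 4) +
      θ * (μ - (μ - θ + Real.sqrt ((μ - θ)^2 + 8 * (μ * θ - 1 + δ))) / 4) = 1 - δ ∧
    Psi μ θ δ = 1 - μ + 2 * ((μ - θ + Real.sqrt ((μ - θ)^2 + 8 * (μ * θ - 1 + δ))) / 4) := by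
  set s : ℝ := Real.sqrt ((μ - θ)^2 + 8 * (μ * θ - 1 + δ)) with hs
  have harg : (0:ℝ) ≤ (μ - θ)^2 + 8 * (μ * θ - 1 + δ) := by nlinarith
  have hs2 : s^2 = (μ - θ)^2 + 8 * (μ * θ - 1 + δ) := Real.sq_sqrt harg
  have hs0 : 0 ≤ s := Real.sqrt_nonneg _
  have hμpos : 0 < μ := by nlinarith
  have hθpos : 0 < θ := by nlinarith
  have habs : |μ - θ| ≤ s := by
    rw [← Real.sqrt_sq_eq_abs]; exact Real.sqrt_le_sqrt (by nlinarith)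
  have habs1 : μ - θ ≤ s := le_trans (le_abs_self _) habs
  have habs2 : θ - μ ≤ s := by have h := neg_le_abs (μ - θ); linarith
  have hsle : s ≤ μ + θ := by
    have : s ≤ Real.sqrt ((μ + θ)^2) := Real.sqrt_le_sqrt (by nlinarith)
    rwa [Real.sqrt_sq (by positivity)] at this
  have hPsi : Psi μ θ δ = (2 - μ - θ + s) / 2 := rfl
  refine ⟨hμpos, hθpos, by linarith, by linarith, ?_, ?_, ?_, ?_⟩
  · rw [hPsi]; linarith
  · rw [hPsi]; linarith
  · rw [hPsi]; nlinarith [hs2]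
  · rw [hPsi]; ring

lemma aux_a_eq_zero (a b r Ψ : ℝ) (ha : 0 ≤ a) (hab : a + b = 1) (hr : r < Ψ)
    (hle : 1 ≤ (1 - Ψ + r) * a + b) : a = 0 := by nlinarith

set_option maxHeartbeats 2000000 in
theorem ell1_sum_sharp_example (Y Z : Type*)
    [NormedAddCommGroup Y] [NormedSpace ℝ Y] [NormedAddCommGroup Z] [NormedSpace ℝ Z]
    [Nontrivial Y] [Nontrivial Z]
    (y₀ : Y) (f₀ : Y →L[ℝ] ℝ) (hy₀ : ‖y₀‖ = 1) (hf₀ : ‖f₀‖ = 1) (hfy₀ : f₀ y₀ = 1)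
    (z₀ : Z) (g₀ : Z →L[ℝ] ℝ) (hz₀ : ‖z₀‖ = 1) (hg₀ : ‖g₀‖ = 1) (hgz₀ : g₀ z₀ = 1)
    (δ μ θ : ℝ) (hδ : δ ∈ Set.Ioo (0:ℝ) 1)
    (hμ : μ ∈ Set.Icc (0:ℝ) 1) (hθ : θ ∈ Set.Icc (0:ℝ) 1)
    (h1 : 1 - δ < μ * θ) (h2 : μ * θ ≤ 2 * (1 - δ))
    (k : ℝ) (hk : k = (μ - θ + Real.sqrt ((μ - θ)^2 + 8 * (μ * θ - 1 + δ))) / (4 * μ)) :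
    ∀ x₀ : WithLp 1 (Y × Z), x₀ = (WithLp.equiv 1 (Y × Z)).symm ((μ * k) • y₀, (μ * (1 - k)) • z₀) →
    ∀ F₀ : WithLp 1 (Y × Z) →L[ℝ] ℝ,
      F₀ = (((1 - Psi μ θ δ) • f₀).comp (ContinuousLinearMap.fst ℝ Y Z) +
            (θ • g₀).comp (ContinuousLinearMap.snd ℝ Y Z)).comp
           (WithLp.prodContinuousLinearEquiv 1 ℝ Y Z).toContinuousLinearMap →
    ‖x₀‖ = μ ∧ ‖F₀‖ = θ ∧ F₀ x₀ = 1 - δ ∧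
      sInf {r : ℝ | ∃ p ∈ PiSet (WithLp 1 (Y × Z)),
        r = max ‖x₀ - p.1‖ ‖F₀ - p.2‖} ≥ Psi μ θ δ := by
  intro x₀ hx₀ F₀ hF₀
  obtain ⟨hμpos, hθpos, hK0', hKμ', h1Ψ0, h1Ψθ, hval', hPsiK'⟩ :=
    sharp_aux δ μ θ hδ.1 hδ.2 hμ.1 hμ.2 hθ.1 hθ.2 h1 h2
  set s : ℝ := Real.sqrt ((μ - θ)^2 + 8 * (μ * θ - 1 + δ)) with hs
  have hKeq : μ * k = (μ - θ + s) / 4 := by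
    rw [hk]; field_simp
  rw [hKeq] at hx₀
  set K : ℝ := (μ - θ + s) / 4 with hKdef
  have hμK : μ * (1 - k) = μ - K := by
    have : μ * (1 - k) = μ - μ * k := by ring
    rw [this, hKeq]
  rw [hμK] at hx₀
  have hK0 : 0 ≤ K := hK0'
  have hKμ : K ≤ μ := hKμ'
  have hval : (1 - Psi μ θ δ) * K + θ * (μ - K) = 1 - δ := hval'
  have hPsiK : Psi μ θ δ = 1 - μ + 2 * K := hPsiK'
  -- evaluation of F₀
  have hF : ∀ x : WithLp 1 (Y × Z),
      F₀ x = (1 - Psi μ θ δ) * f₀ x.fst + θ * g₀ x.snd := by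
    intro x
    rw [hF₀]
    simp only [ContinuousLinearMap.coe_comp', ContinuousLinearEquiv.coe_coe,
      Function.comp_apply, WithLp.prodContinuousLinearEquiv_apply,
      ContinuousLinearMap.add_apply, ContinuousLinearMap.comp_apply,
      ContinuousLinearMap.smul_apply, smul_eq_mul, ContinuousLinearMap.coe_fst',
      ContinuousLinearMap.coe_snd', WithLp.ofLp_fst, WithLp.ofLp_snd]
  have hfst : x₀.fst = K • y₀ := by rw [hx₀]; rfl
  have hsnd : x₀.snd = (μ - K) • z₀ := by rw [hx₀]; rfl
  have hnx₀ : ‖x₀‖ = μ := by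
    rw [norm_L1, hfst, hsnd, norm_smul, norm_smul, hy₀, hz₀,
      Real.norm_eq_abs, Real.norm_eq_abs, abs_of_nonneg hK0,
      abs_of_nonneg (by linarith : (0:ℝ) ≤ μ - K)]
    ring
  refine ⟨hnx₀, ?_, ?_, ?_⟩
  · -- norm of F₀
    refine le_antisymm ?_ ?_
    · refine ContinuousLinearMap.opNorm_le_bound _ hθpos.le (fun x => ?_)
      rw [hF, norm_L1]
      have hb1 : |f₀ x.fst| ≤ ‖x.fst‖ := by
        simpa [hf₀] using f₀.le_opNorm x.fst
      have hb2 : |g₀ x.snd| ≤ ‖x.snd‖ := by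
        simpa [hg₀] using g₀.le_opNorm x.snd
      have key : |(1 - Psi μ θ δ) * f₀ x.fst| + |θ * g₀ x.snd| ≤
          θ * (‖x.fst‖ + ‖x.snd‖) := by
        rw [abs_mul, abs_mul, abs_of_nonneg h1Ψ0, abs_of_nonneg hθpos.le, mul_add]
        refine add_le_add ?_ (by exact mul_le_mul_of_nonneg_left hb2 hθpos.le)
        calc (1 - Psi μ θ δ) * |f₀ x.fst| ≤ θ * |f₀ x.fst| :=
              mul_le_mul_of_nonneg_right h1Ψθ (abs_nonneg _)
          _ ≤ θ * ‖x.fst‖ := mul_le_mul_of_nonneg_left hb1 hθpos.le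
      exact le_trans (abs_add_le _ _) key
    · have he : ‖(WithLp.equiv 1 (Y × Z)).symm ((0 : Y), z₀)‖ = 1 := by
        rw [WithLp.equiv_symm_apply, WithLp.norm_toLp_snd, hz₀]
      have hb := F₀.le_opNorm ((WithLp.equiv 1 (Y × Z)).symm ((0 : Y), z₀))
      rw [he, mul_one, hF] at hb
      have hfst' : ((WithLp.equiv 1 (Y × Z)).symm ((0 : Y), z₀)).fst = 0 := rfl
      have hsnd' : ((WithLp.equiv 1 (Y × Z)).symm ((0 : Y), z₀)).snd = z₀ := rfl
      rw [hfst', hsnd', hgz₀] at hb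
      simp only [map_zero, mul_zero, zero_add, mul_one, Real.norm_eq_abs] at hb
      exact le_trans (le_abs_self θ) hb
  · -- F₀ x₀ = 1 - δ
    rw [hF, hfst, hsnd, map_smul, map_smul, hfy₀, hgz₀, smul_eq_mul, smul_eq_mul,
      mul_one, mul_one]
    exact hval
  · -- the distance estimate
    have hmain : ∀ r ∈ {r : ℝ | ∃ p ∈ PiSet (WithLp 1 (Y × Z)),
        r = max ‖x₀ - p.1‖ ‖F₀ - p.2‖}, Psi μ θ δ ≤ r := by
      rintro r ⟨⟨p, q⟩, ⟨hp1, hq1, hqp⟩, rfl⟩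
      simp only at hp1 hq1 hqp ⊢
      rcases le_or_gt (Psi μ θ δ) ‖F₀ - q‖ with hc | hc
      · exact le_trans hc (le_max_right _ _)
      -- show p.fst = 0
      have hsplit : p = (WithLp.equiv 1 (Y × Z)).symm (p.fst, 0) +
          (WithLp.equiv 1 (Y × Z)).symm (0, p.snd) := by
        rw [WithLp.equiv_symm_apply, ← WithLp.toLp_add, Prod.mk_add_mk, add_zero, zero_add]
        exact ((WithLp.equiv 1 (Y × Z)).symm_apply_apply p).symm
      have hqfst : |q ((WithLp.equiv 1 (Y × Z)).symm (p.fst, 0))| ≤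
          (1 - Psi μ θ δ + ‖F₀ - q‖) * ‖p.fst‖ := by
        have e1 : q ((WithLp.equiv 1 (Y × Z)).symm (p.fst, 0)) =
            F₀ ((WithLp.equiv 1 (Y × Z)).symm (p.fst, 0)) -
            (F₀ - q) ((WithLp.equiv 1 (Y × Z)).symm (p.fst, 0)) := by
          rw [ContinuousLinearMap.sub_apply]; ring
        have e2 : F₀ ((WithLp.equiv 1 (Y × Z)).symm (p.fst, 0)) =
            (1 - Psi μ θ δ) * f₀ p.fst := by
          rw [hF]
          rw [show ((WithLp.equiv 1 (Y × Z)).symm (p.fst, (0:Z))).fst = p.fst from rfl,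
            show ((WithLp.equiv 1 (Y × Z)).symm (p.fst, (0:Z))).snd = (0:Z) from rfl,
            map_zero, mul_zero, add_zero]
        have e3 : |(F₀ - q) ((WithLp.equiv 1 (Y × Z)).symm (p.fst, 0))| ≤
            ‖F₀ - q‖ * ‖p.fst‖ := by
          have hb := (F₀ - q).le_opNorm ((WithLp.equiv 1 (Y × Z)).symm (p.fst, 0))
          rwa [WithLp.equiv_symm_apply, WithLp.norm_toLp_fst] at hb
        have e4 : |(1 - Psi μ θ δ) * f₀ p.fst| ≤ (1 - Psi μ θ δ) * ‖p.fst‖ := by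
          rw [abs_mul, abs_of_nonneg h1Ψ0]
          exact mul_le_mul_of_nonneg_left (by simpa [hf₀] using f₀.le_opNorm p.fst) h1Ψ0
        calc |q ((WithLp.equiv 1 (Y × Z)).symm (p.fst, 0))|
            ≤ |(1 - Psi μ θ δ) * f₀ p.fst| +
              |(F₀ - q) ((WithLp.equiv 1 (Y × Z)).symm (p.fst, 0))| := by
                rw [e1, e2]; exact abs_sub _ _
          _ ≤ (1 - Psi μ θ δ) * ‖p.fst‖ + ‖F₀ - q‖ * ‖p.fst‖ := add_le_add e4 e3
          _ = (1 - Psi μ θ δ + ‖F₀ - q‖) * ‖p.fst‖ := by ring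
      have hqsnd : |q ((WithLp.equiv 1 (Y × Z)).symm (0, p.snd))| ≤ ‖p.snd‖ := by
        have hb := q.le_opNorm ((WithLp.equiv 1 (Y × Z)).symm (0, p.snd))
        rwa [WithLp.equiv_symm_apply, WithLp.norm_toLp_snd, hq1, one_mul] at hb
      have hsum : ‖p.fst‖ + ‖p.snd‖ = 1 := by rw [← norm_L1, hp1]
      have h1eq : q ((WithLp.equiv 1 (Y × Z)).symm (p.fst, 0)) +
          q ((WithLp.equiv 1 (Y × Z)).symm (0, p.snd)) = 1 := by
        rw [← map_add, ← hsplit, hqp]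
      have c1 : (1:ℝ) ≤ (1 - Psi μ θ δ + ‖F₀ - q‖) * ‖p.fst‖ + ‖p.snd‖ := by
        calc (1:ℝ) = q ((WithLp.equiv 1 (Y × Z)).symm (p.fst, 0)) +
            q ((WithLp.equiv 1 (Y × Z)).symm (0, p.snd)) := h1eq.symm
          _ ≤ |q ((WithLp.equiv 1 (Y × Z)).symm (p.fst, 0))| +
              |q ((WithLp.equiv 1 (Y × Z)).symm (0, p.snd))| :=
                add_le_add (le_abs_self _) (le_abs_self _)
          _ ≤ (1 - Psi μ θ δ + ‖F₀ - q‖) * ‖p.fst‖ + ‖p.snd‖ := add_le_add hqfst hqsnd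
      have hpfst0 : ‖p.fst‖ = 0 :=
        aux_a_eq_zero ‖p.fst‖ ‖p.snd‖ ‖F₀ - q‖ (Psi μ θ δ) (norm_nonneg _) hsum hc c1
      have hp0 : p.fst = 0 := norm_eq_zero.mp hpfst0
      have hpsnd1 : ‖p.snd‖ = 1 := by
        rw [← hsum, hpfst0, zero_add]
      have hdfst : (x₀ - p).fst = K • y₀ := by
        show x₀.fst - p.fst = K • y₀
        rw [hfst, hp0, sub_zero]
      have hdsnd : (x₀ - p).snd = (μ - K) • z₀ - p.snd := by
        show x₀.snd - p.snd = _
        rw [hsnd]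
      have t2 : ‖(μ - K) • z₀‖ = μ - K := by
        rw [norm_smul, Real.norm_eq_abs, abs_of_nonneg (by linarith : (0:ℝ) ≤ μ - K),
          hz₀, mul_one]
      have t1 : 1 - (μ - K) ≤ ‖(μ - K) • z₀ - p.snd‖ := by
        have hb := norm_sub_norm_le p.snd ((μ - K) • z₀)
        rw [hpsnd1, t2, norm_sub_rev] at hb
        exact hb
      have hlow : Psi μ θ δ ≤ ‖x₀ - p‖ := by
        rw [norm_L1, hdfst, hdsnd, norm_smul, Real.norm_eq_abs, abs_of_nonneg hK0,
          hy₀, mul_one, hPsiK]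
        have hb := add_le_add_right t1 K
        calc 1 - μ + 2 * K = K + (1 - (μ - K)) := by ring
          _ ≤ K + ‖(μ - K) • z₀ - p.snd‖ := hb
      exact le_trans hlow (le_max_left _ _)
    have hne : {r : ℝ | ∃ p ∈ PiSet (WithLp 1 (Y × Z)),
        r = max ‖x₀ - p.1‖ ‖F₀ - p.2‖}.Nonempty := by
      set G : WithLp 1 (Y × Z) →L[ℝ] ℝ :=
        (f₀.comp (ContinuousLinearMap.fst ℝ Y Z)).comp
          (WithLp.prodContinuousLinearEquiv 1 ℝ Y Z).toContinuousLinearMap with hG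
      have hGap : ∀ x : WithLp 1 (Y × Z), G x = f₀ x.fst := fun x => rfl
      have hGnorm : ‖G‖ = 1 := by
        refine le_antisymm ?_ ?_
        · refine ContinuousLinearMap.opNorm_le_bound _ zero_le_one (fun x => ?_)
          rw [hGap, norm_L1, one_mul, Real.norm_eq_abs]
          have hb : |f₀ x.fst| ≤ ‖x.fst‖ := by simpa [hf₀] using f₀.le_opNorm x.fst
          exact hb.trans (le_add_of_nonneg_right (norm_nonneg x.snd))
        · have he : ‖(WithLp.equiv 1 (Y × Z)).symm (y₀, (0:Z))‖ = 1 := by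
            rw [WithLp.equiv_symm_apply, WithLp.norm_toLp_fst, hy₀]
          have hb := G.le_opNorm ((WithLp.equiv 1 (Y × Z)).symm (y₀, (0:Z)))
          rw [he, mul_one, hGap] at hb
          rw [show ((WithLp.equiv 1 (Y × Z)).symm (y₀, (0:Z))).fst = y₀ from rfl, hfy₀] at hb
          exact le_trans (by norm_num) hb
      refine ⟨max ‖x₀ - (WithLp.equiv 1 (Y × Z)).symm (y₀, (0:Z))‖ ‖F₀ - G‖,
        ⟨((WithLp.equiv 1 (Y × Z)).symm (y₀, (0:Z)), G), ⟨?_, hGnorm, ?_⟩, rfl⟩⟩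
      · rw [WithLp.equiv_symm_apply, WithLp.norm_toLp_fst, hy₀]
      · rw [hGap]; exact hfy₀
    exact le_csInf hne hmain
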